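/- Let β = 5/2 and γ > 1/2. If X and Y are two global-in-time weak solutions of the inviscid dyadic model on [0,∞) with the same componentwise nonnegative initial condition, and both satisfy sup_{t≥0} sup_{n≥1} (λ_n^γ |X_n(t)|) < ∞ and sup_{t≥0} sup_{n≥1} (λ_n^γ |Y_n(t)|) < ∞, then X = Y. -/

import Mathlib

open Set Filter Topology


/-- The dyadic frequencies: `λ_0 = 0`, `λ_n = 2^n` for `n ≥ 1`. -/
noncomputable def lam (n : ℕ) : ℝ := if n = 0 then 0 else 2 ^ n

/-- `X` is a weak solution of the inviscid dyadic model with parameter `β` on `I`. -/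
def IsInviscidSolution (β : ℝ) (I : Set ℝ) (X : ℕ → ℝ → ℝ) : Prop :=
  ∀ n, 1 ≤ n → ∀ t ∈ I, HasDerivWithinAt (X n)
    (lam (n - 1) ^ β * (X (n - 1) t) ^ 2 - lam n ^ β * X n t * X (n + 1) t) I t

noncomputable def wgt (n : ℕ) : ℝ := (2:ℝ)⁻¹ ^ n

lemma lam_nonneg (n : ℕ) : 0 ≤ lam n := by
  rw [lam]; split <;> positivity

lemma lam_pos {n : ℕ} (hn : 1 ≤ n) : 0 < lam n := by
  rw [lam]; rw [if_neg (by omega)]; positivity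

lemma lam_eq {n : ℕ} (hn : 1 ≤ n) : lam n = (2:ℝ) ^ n := by
  rw [lam, if_neg (by omega)]

lemma lam_zero_rpow : lam 0 ^ ((5:ℝ)/2) = 0 := by
  rw [lam, if_pos rfl, Real.zero_rpow (by norm_num)]

lemma wgt_pos (n : ℕ) : 0 < wgt n := by rw [wgt]; positivity

lemma wgt_succ (n : ℕ) : wgt (n+1) = wgt n * 2⁻¹ := by rw [wgt, wgt, pow_succ]

lemma lam_mono_rpow {n : ℕ} (hn : 1 ≤ n) {γ : ℝ} (hγ : 0 ≤ γ) :
    lam n ^ γ ≤ lam (n+1) ^ γ := by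
  apply Real.rpow_le_rpow (lam_nonneg n) _ hγ
  rw [lam_eq hn, lam_eq (by omega : 1 ≤ n+1)]
  exact pow_le_pow_right₀ (by norm_num) (by omega)

/-- The key power computation: `wgt N * lam N ^ (5/2) / (lam N ^ γ)^3 = r ^ N`. -/
lemma pow_calc {γ : ℝ} {N : ℕ} (hN : 1 ≤ N) :
    wgt N * lam N ^ ((5:ℝ)/2) / (lam N ^ γ) ^ (3:ℕ)
      = ((2:ℝ) ^ ((3:ℝ)/2 - 3*γ)) ^ N := by
  have h2 : (0:ℝ) < 2 := two_pos
  have hl : lam N = (2:ℝ) ^ (N:ℝ) := by rw [lam_eq hN, Real.rpow_natCast]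
  have e1 : wgt N = (2:ℝ) ^ (-(N:ℝ)) := by
    rw [wgt, inv_pow, ← Real.rpow_natCast 2 N, Real.rpow_neg h2.le]
  have e2 : lam N ^ ((5:ℝ)/2) = (2:ℝ) ^ ((N:ℝ)*(5/2)) := by
    rw [hl, ← Real.rpow_mul h2.le]
  have e3 : (lam N ^ γ) ^ (3:ℕ) = (2:ℝ) ^ ((N:ℝ)*γ*3) := by
    rw [hl, ← Real.rpow_mul h2.le, ← Real.rpow_natCast ((2:ℝ) ^ ((N:ℝ)*γ)) 3,
      ← Real.rpow_mul h2.le]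
    norm_num
  have e4 : ((2:ℝ) ^ ((3:ℝ)/2 - 3*γ)) ^ N = (2:ℝ) ^ (((3:ℝ)/2 - 3*γ) * (N:ℝ)) := by
    rw [← Real.rpow_natCast ((2:ℝ) ^ ((3:ℝ)/2 - 3*γ)) N, ← Real.rpow_mul h2.le]
  rw [e1, e2, e3, e4, ← Real.rpow_add h2, ← Real.rpow_sub h2]
  ring_nf

lemma mono_of_deriv {D : Set ℝ} (hD : Convex ℝ D) {f f' : ℝ → ℝ}
    (hf : ∀ u ∈ D, HasDerivWithinAt f (f' u) D u)
    (h0 : ∀ u ∈ interior D, 0 ≤ f' u) : MonotoneOn f D :=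
  monotoneOn_of_hasDerivWithinAt_nonneg hD (fun u hu => (hf u hu).continuousWithinAt)
    (fun u hu => (hf u (interior_subset hu)).mono interior_subset) h0
lemma nonneg_on_Ici (f f' : ℝ → ℝ) (M : ℝ)
    (hf : ∀ t ∈ Set.Ici (0:ℝ), HasDerivWithinAt f (f' t) (Set.Ici 0) t)
    (h0 : 0 ≤ f 0)
    (hd : ∀ t ∈ Set.Ici (0:ℝ), f t ≤ 0 → M * f t ≤ f' t) :
    ∀ t ∈ Set.Ici (0:ℝ), 0 ≤ f t := by
  intro t ht
  by_contra hneg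
  push_neg at hneg
  have hcont : ContinuousOn f (Set.Ici 0) := fun u hu => (hf u hu).continuousWithinAt
  have ht0 : (0:ℝ) ≤ t := ht
  set S := Set.Icc (0:ℝ) t ∩ f ⁻¹' (Set.Ici 0) with hSdef
  have h0S : (0:ℝ) ∈ S := ⟨⟨le_refl 0, ht0⟩, h0⟩
  have hSbdd : BddAbove S := ⟨t, fun u hu => hu.1.2⟩
  have hSclosed : IsClosed S := by
    apply ContinuousOn.preimage_isClosed_of_isClosed (hcont.mono (fun u hu => hu.1))
      isClosed_Icc isClosed_Ici
  have hsS : sSup S ∈ S := hSclosed.csSup_mem ⟨0, h0S⟩ hSbdd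
  set s := sSup S with hs
  obtain ⟨⟨hs0, hst⟩, hfs⟩ := hsS
  have hfs' : (0:ℝ) ≤ f s := hfs
  have hslt : s < t := lt_of_le_of_ne hst (fun h => absurd hfs' (not_le.2 (h ▸ hneg)))
  have hneg' : ∀ u, s < u → u ≤ t → f u < 0 := by
    intro u hsu hut
    by_contra h; push_neg at h
    exact absurd (le_csSup hSbdd ⟨⟨le_trans hs0 hsu.le, hut⟩, h⟩) (not_le.2 hsu)
  -- f s = 0
  have hfs0 : f s = 0 := by
    refine le_antisymm ?_ hfs'
    have htend : Tendsto f (𝓝[Set.Ioi s] s) (𝓝 (f s)) :=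
      (hcont s hs0).mono_left (nhdsWithin_mono _ (fun u hu => le_trans hs0 (le_of_lt hu)))
    refine le_of_tendsto htend ?_
    have hmem : Set.Iio t ∈ 𝓝[Set.Ioi s] s :=
      nhdsWithin_le_nhds (Iio_mem_nhds hslt)
    filter_upwards [hmem, self_mem_nhdsWithin] with u hu1 hu2
    exact (hneg' u hu2 (le_of_lt hu1)).le
  -- monotone function g = exp(-M u) * f u on Icc s t
  set g := fun u : ℝ => Real.exp (-M * u) * f u with hg
  have hgd : ∀ u ∈ Set.Icc s t, HasDerivWithinAt g
      (Real.exp (-M * u) * (f' u - M * f u)) (Set.Icc s t) u := by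
    intro u hu
    have hu0 : u ∈ Set.Ici (0:ℝ) := le_trans hs0 hu.1
    have hexp : HasDerivWithinAt (fun u : ℝ => Real.exp (-M * u))
        (Real.exp (-M * u) * (-M)) (Set.Icc s t) u := by
      have := ((hasDerivAt_id u).const_mul (-M)).exp
      simpa [mul_comm] using this.hasDerivWithinAt
    have := hexp.mul ((hf u hu0).mono (fun v hv => le_trans hs0 hv.1))
    exact this.congr_deriv (by ring)
  have hmono : MonotoneOn g (Set.Icc s t) := by
    apply mono_of_deriv (convex_Icc s t) hgd
    intro u hu
    rw [interior_Icc] at hu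
    have hu0 : u ∈ Set.Ici (0:ℝ) := le_trans hs0 hu.1.le
    have hfu : f u ≤ 0 := (hneg' u hu.1 hu.2.le).le
    have := hd u hu0 hfu
    have hexp : (0:ℝ) < Real.exp (-M * u) := Real.exp_pos _
    nlinarith
  have h1 : g s ≤ g t := hmono ⟨le_refl s, hslt.le⟩ ⟨hslt.le, le_refl t⟩ hslt.le
  rw [hg] at h1
  simp only [hfs0, mul_zero] at h1
  nlinarith [Real.exp_pos (-M * t)]

/-- for `β = 5/2` and `γ > 1/2`, two global weak solutions of the
inviscid dyadic model with the same nonnegative initial condition, both bounded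
in the `λ_n^γ` scaling, coincide. -/
theorem inviscid_uniqueness_gamma
    (γ : ℝ) (hγ : 1 / 2 < γ)
    (X Y : ℕ → ℝ → ℝ)
    (hX : IsInviscidSolution (5 / 2) (Set.Ici 0) X)
    (hY : IsInviscidSolution (5 / 2) (Set.Ici 0) Y)
    (hpos : ∀ n, 1 ≤ n → 0 ≤ X n 0)
    (hinit : ∀ n, 1 ≤ n → X n 0 = Y n 0)
    (hbX : ∃ C : ℝ, ∀ t ∈ Set.Ici (0 : ℝ), ∀ n, 1 ≤ n → lam n ^ γ * |X n t| ≤ C)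
    (hbY : ∃ C : ℝ, ∀ t ∈ Set.Ici (0 : ℝ), ∀ n, 1 ≤ n → lam n ^ γ * |Y n t| ≤ C) :
    ∀ n, 1 ≤ n → ∀ t ∈ Set.Ici (0 : ℝ), X n t = Y n t := by
  have hγ0 : (0:ℝ) ≤ γ := by linarith
  obtain ⟨C₁, hC₁⟩ := hbX
  obtain ⟨C₂, hC₂⟩ := hbY
  set C := max C₁ C₂ with hCdef
  have hC0 : 0 ≤ C := by
    have h := hC₁ 0 Set.self_mem_Ici 1 le_rfl
    have h1 : 0 ≤ lam 1 ^ γ * |X 1 0| :=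
      mul_nonneg (Real.rpow_nonneg (lam_nonneg 1) γ) (abs_nonneg _)
    exact le_trans h1 (le_trans h (le_max_left _ _))
  have hXb : ∀ t ∈ Set.Ici (0:ℝ), ∀ n, 1 ≤ n → |X n t| ≤ C / lam n ^ γ := by
    intro t ht n hn
    rw [le_div_iff₀ (Real.rpow_pos_of_pos (lam_pos hn) γ)]
    calc |X n t| * lam n ^ γ = lam n ^ γ * |X n t| := mul_comm _ _
      _ ≤ C₁ := hC₁ t ht n hn
      _ ≤ C := le_max_left _ _
  have hYb : ∀ t ∈ Set.Ici (0:ℝ), ∀ n, 1 ≤ n → |Y n t| ≤ C / lam n ^ γ := by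
    intro t ht n hn
    rw [le_div_iff₀ (Real.rpow_pos_of_pos (lam_pos hn) γ)]
    calc |Y n t| * lam n ^ γ = lam n ^ γ * |Y n t| := mul_comm _ _
      _ ≤ C₂ := hC₂ t ht n hn
      _ ≤ C := le_max_right _ _
  -- nonnegativity of solutions
  have hXnn : ∀ n, 1 ≤ n → ∀ t ∈ Set.Ici (0:ℝ), 0 ≤ X n t := by
    intro n hn
    refine nonneg_on_Ici (X n)
      (fun t => lam (n-1) ^ ((5:ℝ)/2) * X (n-1) t ^ 2
        - lam n ^ ((5:ℝ)/2) * X n t * X (n+1) t)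
      (lam n ^ ((5:ℝ)/2) * (C / lam (n+1) ^ γ))
      (fun t ht => hX n hn t ht) (hpos n hn) ?_
    intro t ht hft
    have hb := hXb t ht (n+1) (by omega)
    have h1 : 0 ≤ lam (n-1) ^ ((5:ℝ)/2) * X (n-1) t ^ 2 :=
      mul_nonneg (Real.rpow_nonneg (lam_nonneg _) _) (sq_nonneg _)
    have h2 : 0 ≤ lam n ^ ((5:ℝ)/2) := Real.rpow_nonneg (lam_nonneg n) _
    have h3 : -(C / lam (n+1) ^ γ) ≤ X (n+1) t := (abs_le.1 hb).1
    nlinarith [mul_le_mul_of_nonneg_left h3 (mul_nonneg h2 (neg_nonneg.mpr hft))]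
  have hYnn : ∀ n, 1 ≤ n → ∀ t ∈ Set.Ici (0:ℝ), 0 ≤ Y n t := by
    intro n hn
    refine nonneg_on_Ici (Y n)
      (fun t => lam (n-1) ^ ((5:ℝ)/2) * Y (n-1) t ^ 2
        - lam n ^ ((5:ℝ)/2) * Y n t * Y (n+1) t)
      (lam n ^ ((5:ℝ)/2) * (C / lam (n+1) ^ γ))
      (fun t ht => hY n hn t ht) (hinit n hn ▸ hpos n hn) ?_
    intro t ht hft
    have hb := hYb t ht (n+1) (by omega)
    have h1 : 0 ≤ lam (n-1) ^ ((5:ℝ)/2) * Y (n-1) t ^ 2 :=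
      mul_nonneg (Real.rpow_nonneg (lam_nonneg _) _) (sq_nonneg _)
    have h2 : 0 ≤ lam n ^ ((5:ℝ)/2) := Real.rpow_nonneg (lam_nonneg n) _
    have h3 : -(C / lam (n+1) ^ γ) ≤ Y (n+1) t := (abs_le.1 hb).1
    nlinarith [mul_le_mul_of_nonneg_left h3 (mul_nonneg h2 (neg_nonneg.mpr hft))]
  -- bounds on sums and differences
  have hSb : ∀ t ∈ Set.Ici (0:ℝ), ∀ n, 1 ≤ n → |X n t + Y n t| ≤ 2*C / lam n ^ γ := by
    intro t ht n hn
    have := abs_add_le (X n t) (Y n t)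
    have h1 := hXb t ht n hn
    have h2 := hYb t ht n hn
    have : |X n t + Y n t| ≤ C / lam n ^ γ + C / lam n ^ γ := by linarith
    calc |X n t + Y n t| ≤ C / lam n ^ γ + C / lam n ^ γ := this
      _ = 2*C / lam n ^ γ := by ring
  have hDb : ∀ t ∈ Set.Ici (0:ℝ), ∀ n, 1 ≤ n → |X n t - Y n t| ≤ 2*C / lam n ^ γ := by
    intro t ht n hn
    have h0 : |X n t - Y n t| ≤ |X n t| + |Y n t| := abs_sub _ _
    have h1 := hXb t ht n hn
    have h2 := hYb t ht n hn
    calc |X n t - Y n t| ≤ C / lam n ^ γ + C / lam n ^ γ := by linarith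
      _ = 2*C / lam n ^ γ := by ring
  -- derivative of each weighted squared difference
  have hterm : ∀ n, 1 ≤ n → ∀ t ∈ Set.Ici (0:ℝ),
      HasDerivWithinAt (fun u => wgt n * (X n u - Y n u)^2)
        (wgt n * (2 * (X n t - Y n t) *
          (lam (n-1) ^ ((5:ℝ)/2) * (X (n-1) t ^ 2 - Y (n-1) t ^ 2)
            - lam n ^ ((5:ℝ)/2) * (X n t * X (n+1) t - Y n t * Y (n+1) t))))
        (Set.Ici 0) t := by
    intro n hn t ht
    have h := (((hX n hn t ht).sub (hY n hn t ht)).pow 2).const_mul (wgt n)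
    exact h.congr_deriv (by push_cast [Pi.sub_apply]; ring)
  have hPhi : ∀ N : ℕ, ∀ t ∈ Set.Ici (0:ℝ),
      HasDerivWithinAt (fun u => ∑ n ∈ Finset.Icc 1 N, wgt n * (X n u - Y n u)^2)
        (∑ n ∈ Finset.Icc 1 N, wgt n * (2 * (X n t - Y n t) *
          (lam (n-1) ^ ((5:ℝ)/2) * (X (n-1) t ^ 2 - Y (n-1) t ^ 2)
            - lam n ^ ((5:ℝ)/2) * (X n t * X (n+1) t - Y n t * Y (n+1) t))))
        (Set.Ici 0) t := by
    intro N t ht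
    exact HasDerivWithinAt.fun_sum (fun n hn => hterm n (Finset.mem_Icc.1 hn).1 t ht)
  -- telescoping identity
  have key : ∀ t : ℝ, ∀ N : ℕ,
      (∑ n ∈ Finset.Icc 1 N, wgt n * (2 * (X n t - Y n t) *
          (lam (n-1) ^ ((5:ℝ)/2) * (X (n-1) t ^ 2 - Y (n-1) t ^ 2)
            - lam n ^ ((5:ℝ)/2) * (X n t * X (n+1) t - Y n t * Y (n+1) t))))
        = -(wgt N * lam N ^ ((5:ℝ)/2) * (X N t + Y N t) * (X N t - Y N t)
              * (X (N+1) t - Y (N+1) t))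
          - ∑ n ∈ Finset.Icc 1 N,
              wgt n * lam n ^ ((5:ℝ)/2) * (X (n+1) t + Y (n+1) t) * (X n t - Y n t)^2 := by
    intro t N
    induction N with
    | zero => simp [lam_zero_rpow]
    | succ N ih =>
      rw [Finset.sum_Icc_succ_top (by omega : 1 ≤ N+1),
          Finset.sum_Icc_succ_top (by omega : 1 ≤ N+1), ih, wgt_succ]
      simp only [Nat.add_sub_cancel]
      ring
  set r := (2:ℝ) ^ ((3:ℝ)/2 - 3*γ) with hrdef
  have hr0 : 0 ≤ r := Real.rpow_nonneg (by norm_num) _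
  have hr1 : r < 1 := Real.rpow_lt_one_of_one_lt_of_neg (by norm_num) (by linarith)
  -- the derivative bound
  have hbound : ∀ N, 1 ≤ N → ∀ t ∈ Set.Ici (0:ℝ),
      (∑ n ∈ Finset.Icc 1 N, wgt n * (2 * (X n t - Y n t) *
          (lam (n-1) ^ ((5:ℝ)/2) * (X (n-1) t ^ 2 - Y (n-1) t ^ 2)
            - lam n ^ ((5:ℝ)/2) * (X n t * X (n+1) t - Y n t * Y (n+1) t))))
        ≤ 8 * C^3 * r^N := by
    intro N hN t ht
    rw [key t N]
    have hsum : 0 ≤ ∑ n ∈ Finset.Icc 1 N,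
        wgt n * lam n ^ ((5:ℝ)/2) * (X (n+1) t + Y (n+1) t) * (X n t - Y n t)^2 := by
      apply Finset.sum_nonneg
      intro n hn
      have h1 := (Finset.mem_Icc.1 hn).1
      have hS : 0 ≤ X (n+1) t + Y (n+1) t :=
        add_nonneg (hXnn (n+1) (by omega) t ht) (hYnn (n+1) (by omega) t ht)
      exact mul_nonneg (mul_nonneg (mul_nonneg (wgt_pos n).le
        (Real.rpow_nonneg (lam_nonneg n) _)) hS) (sq_nonneg _)
    have hp : 0 < lam N ^ γ := Real.rpow_pos_of_pos (lam_pos hN) γ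
    have hmonoL := lam_mono_rpow hN hγ0
    have h1 : |X N t + Y N t| ≤ 2*C / lam N ^ γ := hSb t ht N hN
    have h2 : |X N t - Y N t| ≤ 2*C / lam N ^ γ := hDb t ht N hN
    have h3 : |X (N+1) t - Y (N+1) t| ≤ 2*C / lam N ^ γ := by
      refine le_trans (hDb t ht (N+1) (by omega)) ?_
      gcongr
    have hfin : wgt N * lam N ^ ((5:ℝ)/2) * (2*C/lam N ^ γ) * (2*C/lam N ^ γ)
        * (2*C/lam N ^ γ) = 8*C^3 * r^N := by
      rw [hrdef, ← pow_calc hN (γ := γ)]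
      field_simp
      ring
    have hA : |wgt N * lam N ^ ((5:ℝ)/2) * (X N t + Y N t) * (X N t - Y N t)
        * (X (N+1) t - Y (N+1) t)| ≤ 8*C^3*r^N := by
      rw [abs_mul, abs_mul, abs_mul, abs_mul,
        abs_of_nonneg (wgt_pos N).le, abs_of_nonneg (Real.rpow_nonneg (lam_nonneg N) _)]
      rw [← hfin]
      have hwL : 0 ≤ wgt N * lam N ^ ((5:ℝ)/2) :=
        mul_nonneg (wgt_pos N).le (Real.rpow_nonneg (lam_nonneg N) _)
      gcongr
    linarith [neg_le_abs (wgt N * lam N ^ ((5:ℝ)/2) * (X N t + Y N t) * (X N t - Y N t)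
        * (X (N+1) t - Y (N+1) t))]
  -- integrate the bound
  have hPhiBound : ∀ N, 1 ≤ N → ∀ t ∈ Set.Ici (0:ℝ),
      (∑ n ∈ Finset.Icc 1 N, wgt n * (X n t - Y n t)^2) ≤ 8*C^3*r^N * t := by
    intro N hN t ht
    have hmono : MonotoneOn
        (fun u => 8*C^3*r^N * u - ∑ n ∈ Finset.Icc 1 N, wgt n * (X n u - Y n u)^2)
        (Set.Ici 0) := by
      apply mono_of_deriv (convex_Ici 0)
        (f' := fun u => 8*C^3*r^N - ∑ n ∈ Finset.Icc 1 N, wgt n * (2 * (X n u - Y n u) *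
          (lam (n-1) ^ ((5:ℝ)/2) * (X (n-1) u ^ 2 - Y (n-1) u ^ 2)
            - lam n ^ ((5:ℝ)/2) * (X n u * X (n+1) u - Y n u * Y (n+1) u))))
      · intro u hu
        have h1 : HasDerivWithinAt (fun u : ℝ => 8*C^3*r^N * u) (8*C^3*r^N) (Set.Ici 0) u := by
          simpa using (hasDerivWithinAt_id u (Set.Ici 0)).const_mul (8*C^3*r^N)
        exact h1.sub (hPhi N u hu)
      · intro u hu
        rw [interior_Ici] at hu
        have := hbound N hN u (Set.mem_Ici.2 (le_of_lt hu))
        linarith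
    have hstep := hmono (le_refl (0:ℝ)) ht ht
    have hzero : (∑ n ∈ Finset.Icc 1 N, wgt n * (X n 0 - Y n 0)^2) = 0 := by
      apply Finset.sum_eq_zero
      intro n hn
      rw [hinit n (Finset.mem_Icc.1 hn).1]
      ring
    simp only [mul_zero, hzero, sub_zero] at hstep
    linarith
  -- conclusion
  intro n hn t ht
  have hev : ∀ N, n ≤ N → wgt n * (X n t - Y n t)^2 ≤ 8*C^3*r^N * t := by
    intro N hNn
    refine le_trans ?_ (hPhiBound N (le_trans hn hNn) t ht)
    apply Finset.single_le_sum (f := fun m => wgt m * (X m t - Y m t)^2)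
    · intro m _
      exact mul_nonneg (wgt_pos m).le (sq_nonneg _)
    · exact Finset.mem_Icc.2 ⟨hn, hNn⟩
  have htend : Tendsto (fun N : ℕ => 8*C^3*r^N * t) atTop (𝓝 0) := by
    have h := ((tendsto_pow_atTop_nhds_zero_of_lt_one hr0 hr1).const_mul (8*C^3)).mul_const t
    simpa using h
  have hle : wgt n * (X n t - Y n t)^2 ≤ 0 :=
    ge_of_tendsto htend (eventually_atTop.2 ⟨n, hev⟩)
  have h1 : 0 ≤ (X n t - Y n t)^2 := sq_nonneg _
  have hw := wgt_pos n
  have hs0 : (X n t - Y n t)^2 ≤ 0 := by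
    have h := (mul_le_mul_iff_right₀ hw).mpr (le_refl ((X n t - Y n t)^2))
    nlinarith
  have hs : (X n t - Y n t)^2 = 0 := le_antisymm hs0 h1
  have h2 : X n t - Y n t = 0 := by
    exact pow_eq_zero_iff (two_ne_zero) |>.1 hs
  linarith
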